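/- Under the setup of the reduction from CC-SP to Minimum Weight t-Link Path (edge weights w(i,j) = Σ_v [r(v,{c_i,c_j}) − r(v,{c_i})], source 0, target m+1, t = k+1), a size-k committee with total misrepresentation R exists if and only if there is a path from vertex 0 to vertex m+1 using exactly k+1 edges with total weight −U·n + R, where n = |V| and U is the common misrepresentation of the artificial boundary candidates. -/

import Mathlib

open Finset

/-- Telescoping core: for a sequence nonincreasing up to `p` and
nondecreasing after `p`, the sum of `min (h i) (h (i+1)) - h i` equals `h p - h 0`. -/
lemma stmt4_core (t p : ℕ) (h : ℕ → ℝ) (hp : p ≤ t)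
    (h1 : ∀ i, i + 1 ≤ p → h (i + 1) ≤ h i)
    (h2 : ∀ i, p ≤ i → i + 1 ≤ t → h i ≤ h (i + 1)) :
    ∑ i ∈ Finset.range t, (min (h i) (h (i + 1)) - h i) = h p - h 0 := by
  rw [← Finset.sum_range_add_sum_Ico _ hp]
  have e1 : ∑ i ∈ Finset.range p, (min (h i) (h (i + 1)) - h i)
      = ∑ i ∈ Finset.range p, (h (i + 1) - h i) := by
    refine Finset.sum_congr rfl fun i hi => ?_
    rw [min_eq_right (h1 i (Finset.mem_range.mp hi))]
  have e2 : ∑ i ∈ Finset.Ico p t, (min (h i) (h (i + 1)) - h i) = 0 := by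
    refine Finset.sum_eq_zero fun i hi => ?_
    obtain ⟨hpi, hit⟩ := Finset.mem_Ico.mp hi
    rw [min_eq_left (h2 i hpi hit)]
    ring
  rw [e1, e2, Finset.sum_range_sub]
  ring

/-- Per-voter lemma: the weight of the path equals the misrepresentation of the
committee minus `U`. -/
lemma stmt4_voter {m k : ℕ} (f : Fin (m + 2) → ℝ) (U : ℝ) (hU : ∀ c, f c ≤ U)
    (hsp : ∀ a b c : Fin (m + 2), a < b → b < c → f a < f b → f b ≤ f c)
    (hsp' : ∀ a b c : Fin (m + 2), a < b → b < c → f c < f b → f b ≤ f a)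
    (hf0 : f 0 = U) (hflast : f (Fin.last (m + 1)) = U)
    (a : Fin (k + 2) → Fin (m + 2)) (ha : StrictMono a)
    (ha0 : a 0 = 0) (halast : a (Fin.last (k + 1)) = Fin.last (m + 1))
    (W : Finset (Fin (m + 2))) (hW : W.Nonempty)
    (hWsub : ∀ c ∈ W, ∃ j, a j = c)
    (hWsup : ∀ j : Fin (k + 2), j ≠ 0 → j ≠ Fin.last (k + 1) → a j ∈ W) :
    ∑ i : Fin (k + 1), (min (f (a i.castSucc)) (f (a i.succ)) - f (a i.castSucc))
      = W.inf' hW f - U := by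
  set g : Fin (k + 2) → ℝ := fun j => f (a j) with hg
  have gsp : ∀ x y z : Fin (k + 2), x < y → y < z → g x < g y → g y ≤ g z :=
    fun x y z hxy hyz => hsp (a x) (a y) (a z) (ha hxy) (ha hyz)
  have gsp' : ∀ x y z : Fin (k + 2), x < y → y < z → g z < g y → g y ≤ g x :=
    fun x y z hxy hyz => hsp' (a x) (a y) (a z) (ha hxy) (ha hyz)
  obtain ⟨p, -, hpmin⟩ := Finset.exists_min_image Finset.univ g Finset.univ_nonempty
  have hpmin' : ∀ j : Fin (k + 2), g p ≤ g j := fun j => hpmin j (Finset.mem_univ j)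
  set h : ℕ → ℝ := fun i => g ⟨min i (k + 1), by omega⟩ with hh
  have hval : ∀ i : ℕ, (hi : i ≤ k + 1) → h i = g ⟨i, by omega⟩ := by
    intro i hi
    simp only [hh]
    congr 1
    exact Fin.ext (by simp [Nat.min_eq_left hi])
  have hpk : (p : ℕ) ≤ k + 1 := Nat.lt_succ_iff.mp p.isLt
  have h1 : ∀ i, i + 1 ≤ (p : ℕ) → h (i + 1) ≤ h i := by
    intro i hip
    have hi1 : i + 1 ≤ k + 1 := le_trans hip hpk
    rw [hval (i + 1) hi1, hval i (by omega)]
    by_contra hcon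
    push_neg at hcon
    rcases eq_or_lt_of_le hip with heq | hlt
    · have hpe : (⟨i + 1, by omega⟩ : Fin (k + 2)) = p := Fin.ext heq
      have h4 := congrArg g hpe
      have h5 := hpmin' ⟨i, by omega⟩
      linarith
    · have h3 := gsp ⟨i, by omega⟩ ⟨i + 1, by omega⟩ p
        (by simp [Fin.lt_def]) (by simp [Fin.lt_def]; omega) hcon
      have := hpmin' ⟨i, by omega⟩
      linarith
  have h2 : ∀ i, (p : ℕ) ≤ i → i + 1 ≤ k + 1 → h i ≤ h (i + 1) := by
    intro i hpi hi1
    rw [hval i (by omega), hval (i + 1) hi1]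
    by_contra hcon
    push_neg at hcon
    rcases eq_or_lt_of_le hpi with heq | hlt
    · have hpe : p = (⟨i, by omega⟩ : Fin (k + 2)) := Fin.ext heq
      have h4 := congrArg g hpe
      have h5 := hpmin' ⟨i + 1, by omega⟩
      linarith
    · have h3 := gsp' p ⟨i, by omega⟩ ⟨i + 1, by omega⟩
        (by simp [Fin.lt_def]; omega) (by simp [Fin.lt_def]) hcon
      have := hpmin' ⟨i + 1, by omega⟩
      linarith
  have key := stmt4_core (k + 1) (p : ℕ) h hpk h1 h2
  have lhs : ∑ i : Fin (k + 1),
      (min (f (a i.castSucc)) (f (a i.succ)) - f (a i.castSucc))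
      = ∑ i ∈ Finset.range (k + 1), (min (h i) (h (i + 1)) - h i) := by
    rw [← Fin.sum_univ_eq_sum_range (fun j => min (h j) (h (j + 1)) - h j) (k + 1)]
    refine Finset.sum_congr rfl fun i _ => ?_
    have e1 : f (a i.castSucc) = h (i : ℕ) := by
      rw [hval (i : ℕ) i.isLt.le]
      exact congrArg f (congrArg a (Fin.ext (by simp)))
    have e2 : f (a i.succ) = h ((i : ℕ) + 1) := by
      rw [hval ((i : ℕ) + 1) i.isLt]
      exact congrArg f (congrArg a (Fin.ext (by simp)))
    rw [e1, e2]
  have h0eq : h 0 = U := by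
    rw [hval 0 (by omega)]
    have : (⟨0, by omega⟩ : Fin (k + 2)) = 0 := rfl
    rw [this]
    simp only [hg]
    rw [ha0, hf0]
  have hpval : h (p : ℕ) = g p := by
    rw [hval (p : ℕ) hpk]
  have hginf : g p = W.inf' hW f := by
    refine le_antisymm (Finset.le_inf' hW _ fun b hb => ?_) ?_
    · obtain ⟨j, hj⟩ := hWsub b hb
      rw [← hj]
      exact hpmin' j
    · by_cases hp0 : p = 0
      · have hgu : g p = U := by
          rw [hp0]; simp only [hg]; rw [ha0, hf0]
        rw [hgu]
        obtain ⟨c, hc⟩ := hW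
        exact le_trans (Finset.inf'_le f hc) (hU c)
      · by_cases hpl : p = Fin.last (k + 1)
        · have hgu : g p = U := by
            rw [hpl]; simp only [hg]; rw [halast, hflast]
          rw [hgu]
          obtain ⟨c, hc⟩ := hW
          exact le_trans (Finset.inf'_le f hc) (hU c)
        · exact Finset.inf'_le f (hWsup p hp0 hpl)
  rw [lhs, key, hpval, h0eq, hginf]

theorem stmt4 {V : Type*} [Fintype V] (m k : ℕ) (hk : 0 < k)
    (r : V → Fin (m + 2) → ℝ) (hnn : ∀ v c, 0 ≤ r v c)
    (hsp : ∀ (v : V) (a b c : Fin (m + 2)), a < b → b < c → r v a < r v b → r v b ≤ r v c)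
    (hsp' : ∀ (v : V) (a b c : Fin (m + 2)), a < b → b < c → r v c < r v b → r v b ≤ r v a)
    (U : ℝ) (hU : ∀ v c, r v c ≤ U)
    (hb0 : ∀ v, r v 0 = U) (hblast : ∀ v, r v (Fin.last (m + 1)) = U)
    (R : ℝ) :
    (∃ (W : Finset (Fin (m + 2))) (hW : W.Nonempty),
        W.card = k ∧ (∀ c ∈ W, c ≠ 0 ∧ c ≠ Fin.last (m + 1)) ∧
        ∑ v : V, W.inf' hW (r v) = R)
    ↔ (∃ a : Fin (k + 2) → Fin (m + 2),
        StrictMono a ∧ a 0 = 0 ∧ a (Fin.last (k + 1)) = Fin.last (m + 1) ∧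
        ∑ i : Fin (k + 1), ∑ v : V,
            (min (r v (a i.castSucc)) (r v (a i.succ)) - r v (a i.castSucc))
          = -U * (Fintype.card V) + R) := by
  constructor
  · rintro ⟨W, hW, hcard, hbound, hsum⟩
    set S : Finset (Fin (m + 2)) :=
      insert (0 : Fin (m + 2)) (insert (Fin.last (m + 1)) W) with hS
    have h0l : (0 : Fin (m + 2)) ≠ Fin.last (m + 1) := by
      simp [Fin.ext_iff]
    have h0S : (0 : Fin (m + 2)) ∉ insert (Fin.last (m + 1)) W := by
      simp only [Finset.mem_insert]
      rintro (h | h)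
      · exact h0l h
      · exact (hbound 0 h).1 rfl
    have hlW : Fin.last (m + 1) ∉ W := fun h => (hbound _ h).2 rfl
    have hScard : S.card = k + 2 := by
      rw [hS, Finset.card_insert_of_notMem h0S, Finset.card_insert_of_notMem hlW, hcard]
    set e := S.orderIsoOfFin hScard with he
    set a : Fin (k + 2) → Fin (m + 2) := fun j => ((e j : S) : Fin (m + 2)) with haa
    have hamono : StrictMono a := fun i j hij => Subtype.coe_lt_coe.mpr (e.strictMono hij)
    have h0mem : (0 : Fin (m + 2)) ∈ S := Finset.mem_insert_self _ _
    have hlmem : Fin.last (m + 1) ∈ S :=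
      Finset.mem_insert_of_mem (Finset.mem_insert_self _ _)
    have ha0 : a 0 = 0 := by
      refine le_antisymm ?_ (Fin.zero_le _)
      calc a 0 ≤ a (e.symm ⟨0, h0mem⟩) := hamono.monotone (Fin.zero_le _)
        _ = 0 := by simp [haa]
    have halast : a (Fin.last (k + 1)) = Fin.last (m + 1) := by
      refine le_antisymm (Fin.le_last _) ?_
      calc Fin.last (m + 1) = a (e.symm ⟨Fin.last (m + 1), hlmem⟩) := by simp [haa]
        _ ≤ a (Fin.last (k + 1)) := hamono.monotone (Fin.le_last _)
    have hWsub : ∀ c ∈ W, ∃ j, a j = c := by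
      intro c hc
      have hcS : c ∈ S := Finset.mem_insert_of_mem (Finset.mem_insert_of_mem hc)
      exact ⟨e.symm ⟨c, hcS⟩, by simp [haa]⟩
    have hWsup : ∀ j : Fin (k + 2), j ≠ 0 → j ≠ Fin.last (k + 1) → a j ∈ W := by
      intro j hj0 hjl
      have hmemS : a j ∈ S := (e j).2
      have hne0 : a j ≠ 0 := fun h => hj0 (hamono.injective (h.trans ha0.symm))
      have hnel : a j ≠ Fin.last (m + 1) :=
        fun h => hjl (hamono.injective (h.trans halast.symm))
      rw [hS] at hmemS
      rcases Finset.mem_insert.mp hmemS with h | h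
      · exact absurd h hne0
      rcases Finset.mem_insert.mp h with h | h
      · exact absurd h hnel
      · exact h
    refine ⟨a, hamono, ha0, halast, ?_⟩
    have per : ∀ v : V, ∑ i : Fin (k + 1),
        (min (r v (a i.castSucc)) (r v (a i.succ)) - r v (a i.castSucc))
        = W.inf' hW (r v) - U :=
      fun v => stmt4_voter (r v) U (hU v) (hsp v) (hsp' v) (hb0 v) (hblast v)
        a hamono ha0 halast W hW hWsub hWsup
    rw [Finset.sum_comm]
    calc ∑ v : V, ∑ i : Fin (k + 1),
          (min (r v (a i.castSucc)) (r v (a i.succ)) - r v (a i.castSucc))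
        = ∑ v : V, (W.inf' hW (r v) - U) := Finset.sum_congr rfl fun v _ => per v
      _ = (∑ v : V, W.inf' hW (r v)) - ∑ v : V, U := Finset.sum_sub_distrib _ _
      _ = -U * (Fintype.card V) + R := by
          rw [hsum, Finset.sum_const, nsmul_eq_mul, Finset.card_univ]
          ring
  · rintro ⟨a, ha, ha0, halast, hsum⟩
    haveI : Nonempty (Fin k) := Fin.pos_iff_nonempty.mp hk
    set b : Fin k → Fin (m + 2) := fun i => a ⟨(i : ℕ) + 1, by omega⟩ with hb
    have hbinj : Function.Injective b := by
      intro i j hij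
      have := ha.injective hij
      have hv : (i : ℕ) + 1 = (j : ℕ) + 1 := congrArg Fin.val this
      exact Fin.ext (by omega)
    set W : Finset (Fin (m + 2)) := Finset.image b Finset.univ with hWdef
    have hW : W.Nonempty := (Finset.univ_nonempty).image b
    have hcard : W.card = k := by
      rw [hWdef, Finset.card_image_of_injective _ hbinj, Finset.card_univ, Fintype.card_fin]
    have hbound : ∀ c ∈ W, c ≠ 0 ∧ c ≠ Fin.last (m + 1) := by
      intro c hc
      obtain ⟨i, -, hi⟩ := Finset.mem_image.mp hc
      constructor
      · intro h
        rw [← hi, ← ha0] at h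
        have := ha.injective h
        have hv : (i : ℕ) + 1 = 0 := congrArg Fin.val this
        omega
      · intro h
        rw [← hi, ← halast] at h
        have := ha.injective h
        have hv : (i : ℕ) + 1 = k + 1 := congrArg Fin.val this
        have := i.isLt
        omega
    have hWsub : ∀ c ∈ W, ∃ j, a j = c := by
      intro c hc
      obtain ⟨i, -, hi⟩ := Finset.mem_image.mp hc
      exact ⟨_, hi⟩
    have hWsup : ∀ j : Fin (k + 2), j ≠ 0 → j ≠ Fin.last (k + 1) → a j ∈ W := by
      intro j hj0 hjl
      have hj0' : (j : ℕ) ≠ 0 := fun h => hj0 (Fin.ext h)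
      have hjl' : (j : ℕ) ≠ k + 1 := fun h => hjl (Fin.ext h)
      have hjk : (j : ℕ) < k + 2 := j.isLt
      refine Finset.mem_image.mpr ⟨⟨(j : ℕ) - 1, by omega⟩, Finset.mem_univ _, ?_⟩
      show a ⟨((j : ℕ) - 1) + 1, by omega⟩ = a j
      congr 1
      exact Fin.ext (by simp; omega)
    refine ⟨W, hW, hcard, hbound, ?_⟩
    have per : ∀ v : V, ∑ i : Fin (k + 1),
        (min (r v (a i.castSucc)) (r v (a i.succ)) - r v (a i.castSucc))
        = W.inf' hW (r v) - U :=
      fun v => stmt4_voter (r v) U (hU v) (hsp v) (hsp' v) (hb0 v) (hblast v)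
        a ha ha0 halast W hW hWsub hWsup
    rw [Finset.sum_comm] at hsum
    have hsum2 : ∑ v : V, (W.inf' hW (r v) - U) = -U * (Fintype.card V) + R := by
      rw [← hsum]
      exact Finset.sum_congr rfl fun v _ => (per v).symm
    rw [Finset.sum_sub_distrib, Finset.sum_const, nsmul_eq_mul, Finset.card_univ] at hsum2
    linarith
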